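/- Estimating equations for the minimum density power divergence estimator (Theorem 1): for every β > 0, every probability vector p̂ ∈ ℝ^{L+1}, and every θ in the interior of Θ = (0,∞) × ℝ, the map θ ↦ d_β(p̂, π(θ)) is differentiable with gradient (β + 1) W(θ)ᵀ D_{π(θ)}^{β−1} (π(θ) − p̂), where D_{π(θ)} is the diagonal matrix with diagonal entries π_j(θ); consequently every minimizer θ̂ lying in the interior of Θ satisfies W(θ̂)ᵀ D_{π(θ̂)}^{β−1} (p̂ − π(θ̂)) = 0. -/

import Mathlib

open Real Finset

local notation "E2" => EuclideanSpace ℝ (Fin 2)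

private noncomputable def auxP0 : E2 →L[ℝ] ℝ := EuclideanSpace.proj (0 : Fin 2)
private noncomputable def auxP1 : E2 →L[ℝ] ℝ := EuclideanSpace.proj (1 : Fin 2)
private noncomputable def auxDl (θ : E2) (c : ℝ) : E2 →L[ℝ] ℝ :=
  Real.exp (θ 1 * c) • auxP0 + (θ 0 * c * Real.exp (θ 1 * c)) • auxP1

private lemma auxP0_apply (v : E2) : auxP0 v = v 0 := by simp [auxP0]
private lemma auxP1_apply (v : E2) : auxP1 v = v 1 := by simp [auxP1]
private lemma auxDl_apply (θ : E2) (c : ℝ) (v : E2) :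
    auxDl θ c v = Real.exp (θ 1 * c) * v 0 + θ 0 * c * Real.exp (θ 1 * c) * v 1 := by
  simp [auxDl, auxP0, auxP1]

private lemma aux_hasFDeriv_lam (θ : E2) (c : ℝ) :
    HasFDerivAt (fun θ' : E2 => θ' 0 * Real.exp (θ' 1 * c)) (auxDl θ c) θ := by
  have h0 : HasFDerivAt (fun θ' : E2 => θ' 0) auxP0 θ := by
    simpa [auxP0] using (EuclideanSpace.proj (0 : Fin 2) : E2 →L[ℝ] ℝ).hasFDerivAt (x := θ)
  have h1 : HasFDerivAt (fun θ' : E2 => θ' 1) auxP1 θ := by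
    simpa [auxP1] using (EuclideanSpace.proj (1 : Fin 2) : E2 →L[ℝ] ℝ).hasFDerivAt (x := θ)
  have h := h0.mul ((h1.mul_const c).exp)
  refine h.congr_fderiv ?_
  ext v
  simp [auxDl, auxP0_apply, auxP1_apply, ContinuousLinearMap.smul_apply]
  ring

private lemma aux_lam_pos {lam : E2 → ℕ → ℝ} {x : ℕ → ℝ}
    (hlam : ∀ θ : E2, ∀ i, lam θ i = θ 0 * Real.exp (θ 1 * x i))
    {θ : E2} (hθ : 0 < θ 0) (i : ℕ) : 0 < lam θ i := by
  rw [hlam]; positivity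

private lemma aux_U_open : IsOpen {θ' : E2 | 0 < θ' 0} := by
  have hc : Continuous fun θ' : E2 => θ' 0 := by
    have := (EuclideanSpace.proj (0 : Fin 2) : E2 →L[ℝ] ℝ).continuous
    have he : (⇑(EuclideanSpace.proj (0 : Fin 2) : E2 →L[ℝ] ℝ)) = fun θ' : E2 => θ' 0 := by
      funext v; simp
    rwa [he] at this
  exact isOpen_lt continuous_const hc

private lemma aux_GTgrad
    (x τ tt : ℕ → ℝ) (I : ℕ → ℕ)
    (lam a astar : E2 → ℕ → ℝ) (GT gT : E2 → ℕ → ℝ) (z : E2 → ℕ → E2)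
    (j : ℕ)
    (hlam : ∀ θ : E2, ∀ i, lam θ i = θ 0 * Real.exp (θ 1 * x i))
    (ha : ∀ θ : E2, ∀ i, a θ i = (∑ l ∈ Finset.Icc 1 (i-1), (τ l - τ (l-1)) * lam θ l) / lam θ i)
    (hastar : ∀ θ : E2, ∀ i, astar θ i
      = (∑ l ∈ Finset.Icc 1 (i-1), lam θ l * (τ l - τ (l-1)) * (x l - x i)) / lam θ i)
    (hGTj : ∀ θ : E2, GT θ j = 1 - Real.exp (-(lam θ (I j)) * (tt j + a θ (I j) - τ (I j - 1))))
    (hgTj : ∀ θ : E2, gT θ j = lam θ (I j)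
      * Real.exp (-(lam θ (I j)) * (tt j + a θ (I j) - τ (I j - 1))))
    (hzj : ∀ θ : E2, z θ j = gT θ j • (WithLp.equiv 2 (Fin 2 → ℝ)).symm
        ![(tt j + a θ (I j) - τ (I j - 1)) / θ 0,
          (tt j + a θ (I j) - τ (I j - 1)) * x (I j) + astar θ (I j)])
    (θ : E2) (hθ : 0 < θ 0) :
    HasFDerivAt (fun θ' => GT θ' j) (InnerProductSpace.toDual ℝ E2 (z θ j)) θ := by
  set i := I j with hi
  -- the "nice" form of the exponent
  set Et : E2 → ℝ := fun θ' => (tt j - τ (i-1)) * lam θ' i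
    + ∑ l ∈ Finset.Icc 1 (i-1), (τ l - τ (l-1)) * lam θ' l with hEt
  have hEeq : ∀ θ' : E2, 0 < θ' 0 →
      lam θ' i * (tt j + a θ' i - τ (i-1)) = Et θ' := by
    intro θ' hθ'
    have hl : lam θ' i ≠ 0 := (aux_lam_pos hlam hθ' i).ne'
    have hmul : lam θ' i * a θ' i
        = ∑ l ∈ Finset.Icc 1 (i-1), (τ l - τ (l-1)) * lam θ' l := by
      rw [ha]; field_simp
    calc lam θ' i * (tt j + a θ' i - τ (i-1))
        = (tt j - τ (i-1)) * lam θ' i + lam θ' i * a θ' i := by ring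
      _ = Et θ' := by rw [hmul]
  -- eventual equality of GT with the nice form
  have hmem : {θ' : E2 | 0 < θ' 0} ∈ nhds θ := aux_U_open.mem_nhds hθ
  have hGTeq : (fun θ' => GT θ' j) =ᶠ[nhds θ] fun θ' => 1 - Real.exp (-(Et θ')) := by
    filter_upwards [hmem] with θ' hθ'
    rw [hGTj θ', neg_mul, hEeq θ' hθ']
  -- derivative of the nice form
  set DE : E2 →L[ℝ] ℝ := (tt j - τ (i-1)) • auxDl θ (x i)
    + ∑ l ∈ Finset.Icc 1 (i-1), (τ l - τ (l-1)) • auxDl θ (x l) with hDE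
  have hlamF : ∀ c : ℕ, HasFDerivAt (fun θ' : E2 => lam θ' c) (auxDl θ (x c)) θ := by
    intro c
    have : (fun θ' : E2 => lam θ' c) = fun θ' : E2 => θ' 0 * Real.exp (θ' 1 * x c) :=
      funext fun θ' => hlam θ' c
    rw [this]; exact aux_hasFDeriv_lam θ (x c)
  have hEder : HasFDerivAt Et DE θ := by
    have h1 := (hlamF i).const_mul (tt j - τ (i-1))
    have h2 : HasFDerivAt (fun θ' : E2 => ∑ l ∈ Finset.Icc 1 (i-1), (τ l - τ (l-1)) * lam θ' l)
        (∑ l ∈ Finset.Icc 1 (i-1), (τ l - τ (l-1)) • auxDl θ (x l)) θ :=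
      HasFDerivAt.fun_sum fun l _ => (hlamF l).const_mul (τ l - τ (l-1))
    exact h1.add h2
  have hGder : HasFDerivAt (fun θ' => GT θ' j) (Real.exp (-(Et θ)) • DE) θ := by
    have h3 := (hEder.neg.exp).const_sub 1
    have h4 : HasFDerivAt (fun θ' => 1 - Real.exp (-(Et θ'))) (Real.exp (-(Et θ)) • DE) θ := by
      refine h3.congr_fderiv ?_
      ext v
      simp [ContinuousLinearMap.smul_apply]
    exact h4.congr_of_eventuallyEq hGTeq
  -- identify the derivative with toDual (z θ j)
  have hfinal : InnerProductSpace.toDual ℝ E2 (z θ j) = Real.exp (-(Et θ)) • DE := by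
    have hθ0 : (θ 0 : ℝ) ≠ 0 := hθ.ne'
    have hl : lam θ i ≠ 0 := (aux_lam_pos hlam hθ i).ne'
    have hDEv : ∀ v : E2, DE v
        = ((tt j - τ (i-1)) * lam θ i + ∑ l ∈ Finset.Icc 1 (i-1), (τ l - τ (l-1)) * lam θ l) / θ 0 * v 0
          + ((tt j - τ (i-1)) * lam θ i * x i
            + ∑ l ∈ Finset.Icc 1 (i-1), (τ l - τ (l-1)) * lam θ l * x l) * v 1 := by
      intro v
      simp only [hDE, ContinuousLinearMap.add_apply, ContinuousLinearMap.smul_apply,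
        ContinuousLinearMap.coe_sum', Finset.sum_apply, auxDl_apply, smul_eq_mul]
      have hsplit : ∑ l ∈ Finset.Icc 1 (i-1), (τ l - τ (l-1))
            * (Real.exp (θ 1 * x l) * v 0 + θ 0 * x l * Real.exp (θ 1 * x l) * v 1)
          = (∑ l ∈ Finset.Icc 1 (i-1), (τ l - τ (l-1)) * lam θ l) / θ 0 * v 0
            + (∑ l ∈ Finset.Icc 1 (i-1), (τ l - τ (l-1)) * lam θ l * x l) * v 1 := by
        rw [Finset.sum_div, Finset.sum_mul, Finset.sum_mul, ← Finset.sum_add_distrib]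
        refine Finset.sum_congr rfl fun l _ => ?_
        rw [hlam]; field_simp
      rw [hsplit, hlam, add_div]
      field_simp
      ring
    have hgt : gT θ j = lam θ i * Real.exp (-(Et θ)) := by
      rw [hgTj, neg_mul, hEeq θ hθ]
    have hEx : Et θ = (tt j - τ (i-1)) * lam θ i
        + ∑ l ∈ Finset.Icc 1 (i-1), (τ l - τ (l-1)) * lam θ l := by rw [hEt]
    have hAv : lam θ i * (tt j + a θ i - τ (i-1)) = Et θ := hEeq θ hθ
    have hSb : lam θ i * astar θ i
        = (∑ l ∈ Finset.Icc 1 (i-1), (τ l - τ (l-1)) * lam θ l * x l)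
          - x i * ∑ l ∈ Finset.Icc 1 (i-1), (τ l - τ (l-1)) * lam θ l := by
      rw [hastar]
      rw [mul_div_cancel₀ _ hl, Finset.mul_sum, ← Finset.sum_sub_distrib]
      refine Finset.sum_congr rfl fun l _ => ?_
      ring
    ext v
    rw [ContinuousLinearMap.smul_apply, hDEv v, smul_eq_mul, InnerProductSpace.toDual_apply_apply]
    rw [hzj]
    simp only [PiLp.inner_apply, Fin.sum_univ_two, PiLp.smul_apply, smul_eq_mul,
      WithLp.equiv_symm_apply, WithLp.ofLp_toLp, Matrix.cons_val_zero, Matrix.cons_val_one, Matrix.head_cons,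
      RCLike.inner_apply, conj_trivial]
    rw [hgt]
    rw [hEx] at hAv
    field_simp
    linear_combination (v 0 + θ 0 * x i * v 1) * hAv + θ 0 * v 1 * hSb
  rw [hfinal]; exact hGder

private lemma aux_tau_le (k : ℕ) (τ : ℕ → ℝ)
    (hτmono : ∀ i, i + 1 ≤ k - 1 → τ i < τ (i + 1)) :
    ∀ q p, p ≤ q → q ≤ k - 1 → τ p ≤ τ q := by
  intro q
  induction q with
  | zero => intro p hp _; interval_cases p; exact le_rfl
  | succ n ih =>
    intro p hp hq
    rcases Nat.lt_or_ge p (n + 1) with h | h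
    · exact le_trans (ih p (by omega) (by omega)) (hτmono n hq).le
    · have : p = n + 1 := by omega
      rw [this]

private lemma aux_tau_lt (k : ℕ) (τ : ℕ → ℝ)
    (hτmono : ∀ i, i + 1 ≤ k - 1 → τ i < τ (i + 1)) :
    ∀ p q, p < q → q ≤ k - 1 → τ p < τ q := by
  intro p q hpq hq
  have h1 : τ p ≤ τ (q - 1) := aux_tau_le k τ hτmono (q-1) p (by omega) (by omega)
  have h2 : τ (q - 1) < τ (q - 1 + 1) := hτmono (q-1) (by omega)
  have : q - 1 + 1 = q := by omega
  rw [this] at h2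
  linarith

private lemma aux_cum_mono (k : ℕ) (τ : ℕ → ℝ) (lam : ℕ → ℝ)
    (hτmono : ∀ i, i + 1 ≤ k - 1 → τ i < τ (i + 1)) (hlampos : ∀ i, 0 < lam i) :
    ∀ d i s t, 1 ≤ i → i + d ≤ k → τ (i-1) ≤ s →
      (0 < d → s ≤ τ i ∧ τ (i+d-1) ≤ t) → (d = 0 → s ≤ t) →
    (∑ l ∈ Finset.Icc 1 (i-1), (τ l - τ (l-1)) * lam l) + lam i * (s - τ (i-1))
      ≤ (∑ l ∈ Finset.Icc 1 (i+d-1), (τ l - τ (l-1)) * lam l) + lam (i+d) * (t - τ (i+d-1)) := by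
  intro d
  induction d with
  | zero =>
    intro i s t h1 h2 h3 h4 h5
    simp only [Nat.add_zero]
    nlinarith [hlampos i, h5 rfl]
  | succ d ih =>
    intro i s t h1 h2 h3 h4 h5
    obtain ⟨hsτ, hτt⟩ := h4 (Nat.succ_pos d)
    obtain ⟨i', rfl⟩ : ∃ i', i = i' + 1 := ⟨i - 1, by omega⟩
    have step1 : (∑ l ∈ Finset.Icc 1 (i'+1-1), (τ l - τ (l-1)) * lam l)
          + lam (i'+1) * (s - τ (i'+1-1))
        ≤ (∑ l ∈ Finset.Icc 1 (i'+1-1), (τ l - τ (l-1)) * lam l)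
          + lam (i'+1) * (τ (i'+1) - τ (i'+1-1)) := by
      nlinarith [hlampos (i'+1)]
    have step2 : (∑ l ∈ Finset.Icc 1 (i'+1-1), (τ l - τ (l-1)) * lam l)
          + lam (i'+1) * (τ (i'+1) - τ (i'+1-1))
        = (∑ l ∈ Finset.Icc 1 (i'+1+1-1), (τ l - τ (l-1)) * lam l)
          + lam (i'+1+1) * (τ (i'+1) - τ (i'+1+1-1)) := by
      have e1 : i'+1+1-1 = i'+1 := by omega
      have e2 : i'+1-1 = i' := by omega
      rw [e1, e2]
      rw [Finset.sum_Icc_succ_top (by omega : 1 ≤ i' + 1)]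
      have e3 : i' + 1 - 1 = i' := by omega
      rw [e3]
      ring
    have step3 : (∑ l ∈ Finset.Icc 1 (i'+1+1-1), (τ l - τ (l-1)) * lam l)
          + lam (i'+1+1) * (τ (i'+1) - τ (i'+1+1-1))
        ≤ (∑ l ∈ Finset.Icc 1 (i'+1+1+d-1), (τ l - τ (l-1)) * lam l)
          + lam (i'+1+1+d) * (t - τ (i'+1+1+d-1)) := by
      refine ih (i'+1+1) (τ (i'+1)) t (by omega) (by omega) ?_ ?_ ?_
      · have : i'+1+1-1 = i'+1 := by omega
        rw [this]
      · intro hd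
        constructor
        · exact (hτmono (i'+1) (by omega)).le
        · have : i'+1+1+d-1 = i'+1+(d+1)-1 := by omega
          rw [this]; exact hτt
      · intro hd
        subst hd
        have : i'+1+1+0-1 = i'+1 := by omega
        have h' : τ (i'+1+(0+1)-1) ≤ t := hτt
        simpa using h'
    have efin : i'+1+1+d = i'+1+(d+1) := by omega
    rw [efin] at step3
    exact le_trans step1 (le_trans (le_of_eq step2) step3)

private lemma aux_chain (k : ℕ) (τ : ℕ → ℝ) (lam : ℕ → ℝ)
    (hτmono : ∀ i, i + 1 ≤ k - 1 → τ i < τ (i + 1)) (hml : ∀ i, 0 < lam i)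
    (i₀ i₁ : ℕ) (s t : ℝ) (h01 : 1 ≤ i₀) (h12 : i₁ ≤ k) (hlt : i₀ < i₁)
    (hs : s < τ i₀) (ht : τ (i₁ - 1) ≤ t) :
    (∑ l ∈ Finset.Icc 1 (i₀-1), (τ l - τ (l-1)) * lam l) + lam i₀ * (s - τ (i₀-1))
      < (∑ l ∈ Finset.Icc 1 (i₁-1), (τ l - τ (l-1)) * lam l) + lam i₁ * (t - τ (i₁-1)) := by
  obtain ⟨i', rfl⟩ : ∃ i', i₀ = i' + 1 := ⟨i₀ - 1, by omega⟩
  have step1 : (∑ l ∈ Finset.Icc 1 (i'+1-1), (τ l - τ (l-1)) * lam l)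
        + lam (i'+1) * (s - τ (i'+1-1))
      < (∑ l ∈ Finset.Icc 1 (i'+1-1), (τ l - τ (l-1)) * lam l)
        + lam (i'+1) * (τ (i'+1) - τ (i'+1-1)) := by
    nlinarith [hml (i'+1)]
  have step2 : (∑ l ∈ Finset.Icc 1 (i'+1-1), (τ l - τ (l-1)) * lam l)
        + lam (i'+1) * (τ (i'+1) - τ (i'+1-1))
      = (∑ l ∈ Finset.Icc 1 (i'+1), (τ l - τ (l-1)) * lam l)
        + lam (i'+2) * (τ (i'+1) - τ (i'+2-1)) := by
    rw [Finset.sum_Icc_succ_top (by omega : 1 ≤ i' + 1)]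
    have e3 : i' + 1 - 1 = i' := by omega
    have e4 : i' + 2 - 1 = i' + 1 := by omega
    rw [e3, e4]
    ring
  have step3 : (∑ l ∈ Finset.Icc 1 (i'+1), (τ l - τ (l-1)) * lam l)
        + lam (i'+2) * (τ (i'+1) - τ (i'+2-1))
      ≤ (∑ l ∈ Finset.Icc 1 (i₁-1), (τ l - τ (l-1)) * lam l)
        + lam i₁ * (t - τ (i₁-1)) := by
    have hd : i₁ = (i'+2) + (i₁ - i' - 2) := by omega
    have key := aux_cum_mono k τ lam hτmono hml (i₁ - i' - 2) (i'+2) (τ (i'+1)) t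
      (by omega) (by omega) (by rw [show i'+2-1 = i'+1 by omega]) ?_ ?_
    · rw [hd]
      convert key using 4 <;> omega
    · intro hdpos
      constructor
      · have := hτmono (i'+1) (by omega)
        linarith [aux_tau_le k τ hτmono (i'+2) (i'+2) le_rfl (by omega), this]
      · rw [show i'+2+(i₁-i'-2)-1 = i₁ - 1 by omega]; exact ht
    · intro hd0
      rw [show i'+2-1 = i'+1 by omega] at *
      have : i' + 2 = i₁ := by omega
      rw [show i'+1 = i₁ - 1 by omega]
      exact ht
  calc _ < _ := step1
    _ = _ := step2
    _ ≤ _ := step3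

private lemma aux_Lam_strict
    (k L : ℕ) (x τ tt : ℕ → ℝ) (I : ℕ → ℕ)
    (lam a : E2 → ℕ → ℝ)
    (hτmono : ∀ i, i + 1 ≤ k - 1 → τ i < τ (i + 1))
    (htmono : ∀ j, j + 1 ≤ L → tt j < tt (j + 1))
    (hreg : ∀ j, j ≤ L →
      1 ≤ I j ∧ I j ≤ k ∧ τ (I j - 1) ≤ tt j ∧ (I j < k → tt j < τ (I j)))
    (hlam : ∀ θ : E2, ∀ i, lam θ i = θ 0 * Real.exp (θ 1 * x i))
    (ha : ∀ θ : E2, ∀ i, a θ i = (∑ l ∈ Finset.Icc 1 (i-1), (τ l - τ (l-1)) * lam θ l) / lam θ i)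
    (θ : E2) (hθ : 0 < θ 0) (j : ℕ) (hj1 : 1 ≤ j) (hjL : j ≤ L) :
    lam θ (I (j-1)) * (tt (j-1) + a θ (I (j-1)) - τ (I (j-1) - 1))
      < lam θ (I j) * (tt j + a θ (I j) - τ (I j - 1)) := by
  have hml : ∀ c, 0 < lam θ c := aux_lam_pos hlam hθ
  have hLL : ∀ j' : ℕ, lam θ (I j') * (tt j' + a θ (I j') - τ (I j' - 1))
      = (∑ l ∈ Finset.Icc 1 (I j' - 1), (τ l - τ (l-1)) * lam θ l)
        + lam θ (I j') * (tt j' - τ (I j' - 1)) := by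
    intro j'
    have hmul : lam θ (I j') * a θ (I j')
        = ∑ l ∈ Finset.Icc 1 (I j' - 1), (τ l - τ (l-1)) * lam θ l := by
      rw [ha]
      exact mul_div_cancel₀ _ (hml (I j')).ne'
    calc lam θ (I j') * (tt j' + a θ (I j') - τ (I j' - 1))
        = lam θ (I j') * a θ (I j') + lam θ (I j') * (tt j' - τ (I j' - 1)) := by ring
      _ = _ := by rw [hmul]
  obtain ⟨h01, h02, h03, h04⟩ := hreg (j-1) (by omega)
  obtain ⟨h11, h12, h13, h14⟩ := hreg j hjL
  have htlt : tt (j-1) < tt j := by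
    have := htmono (j-1) (by omega)
    rwa [show j - 1 + 1 = j by omega] at this
  have hIle : I (j-1) ≤ I j := by
    by_contra hcon
    push_neg at hcon
    have hIk : I j < k := by omega
    have h4 := h14 hIk
    have : τ (I j) ≤ τ (I (j-1) - 1) :=
      aux_tau_le k τ hτmono (I (j-1) - 1) (I j) (by omega) (by omega)
    linarith
  rw [hLL (j-1), hLL j]
  rcases Nat.lt_or_ge (I (j-1)) (I j) with hlt | hge
  · have hI0k : I (j-1) < k := by omega
    exact aux_chain k τ (lam θ) hτmono hml (I (j-1)) (I j) (tt (j-1)) (tt j)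
      h01 h12 hlt (h04 hI0k) h13
  · have heq : I (j-1) = I j := by omega
    rw [heq]
    nlinarith [hml (I j)]

private lemma aux_comp {f : E2 → ℝ} {g : E2} {θ : E2}
    (hf : HasFDerivAt f (InnerProductSpace.toDual ℝ E2 g) θ)
    {φ : ℝ → ℝ} {c : ℝ} (hφ : HasDerivAt φ c (f θ)) :
    HasFDerivAt (fun θ' => φ (f θ')) (InnerProductSpace.toDual ℝ E2 (c • g)) θ := by
  have h := hφ.hasFDerivAt.comp θ hf
  refine h.congr_fderiv ?_
  ext v
  simp only [ContinuousLinearMap.coe_comp', Function.comp_apply,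
    ContinuousLinearMap.smulRight_apply, ContinuousLinearMap.one_apply,
    InnerProductSpace.toDual_apply_apply, smul_eq_mul, real_inner_smul_left,
    ContinuousLinearMap.toSpanSingleton_apply]
  ring

private lemma aux_rpow_deriv (β : ℝ) (hβ : 0 < β) (p : ℝ) (y : ℝ) (hy : 0 < y) :
    HasDerivAt (fun y' : ℝ => y' ^ (1 + β) - (1 + 1/β) * p * y' ^ β + (1/β) * p ^ (1 + β))
      ((β + 1) * (y ^ (β - 1) * (y - p))) y := by
  have h1 : HasDerivAt (fun y' : ℝ => y' ^ (1 + β)) ((1 + β) * y ^ (1 + β - 1)) y :=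
    Real.hasDerivAt_rpow_const (Or.inl hy.ne')
  have h2 : HasDerivAt (fun y' : ℝ => y' ^ β) (β * y ^ (β - 1)) y :=
    Real.hasDerivAt_rpow_const (Or.inl hy.ne')
  have h := (h1.sub (h2.const_mul ((1 + 1/β) * p))).add_const ((1/β) * p ^ (1 + β))
  refine h.congr_deriv ?_
  have e1 : (1 : ℝ) + β - 1 = β := by ring
  rw [e1]
  have e2 : y ^ β = y ^ (β - 1) * y := by
    rw [← Real.rpow_add_one hy.ne' (β - 1), show β - 1 + 1 = β by ring]
  rw [e2]
  field_simp
  ring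

/-- Estimating equations for the minimum density power divergence estimator (Theorem 1 of the
paper): for every `β > 0`, every probability vector `phat`, and every `θ` in the interior of
`Θ = (0,∞) × ℝ` (represented as `EuclideanSpace ℝ (Fin 2)`), the DPD objective
`θ ↦ d_β(phat, π(θ))` is differentiable with gradient
`(β+1) W(θ)ᵀ D_{π(θ)}^{β−1} (π(θ) − phat) = (β+1) ∑_j π_j(θ)^{β−1}(π_j(θ) − phat_j) w_j(θ)`,
and consequently every interior minimizer `θ̂` satisfies
`W(θ̂)ᵀ D_{π(θ̂)}^{β−1} (phat − π(θ̂)) = 0`.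
Here `a θ i`, `astar θ i` denote the paper's `a_{i−1}(θ)`, `a*_{i−1}(θ)`; `I j` is the regime
index of the inspection time `tt j`; powers with real exponents are `Real.rpow`. -/
theorem stmt8
    (k L : ℕ) (x τ tt : ℕ → ℝ) (I : ℕ → ℕ) (β : ℝ) (phat : ℕ → ℝ)
    (lam a astar : EuclideanSpace ℝ (Fin 2) → ℕ → ℝ)
    (GT gT : EuclideanSpace ℝ (Fin 2) → ℕ → ℝ)
    (piv : EuclideanSpace ℝ (Fin 2) → ℕ → ℝ)
    (z w : EuclideanSpace ℝ (Fin 2) → ℕ → EuclideanSpace ℝ (Fin 2))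
    (hk : 1 ≤ k) (hL : 1 ≤ L) (hβ : 0 < β)
    (hx : ∀ i, 1 ≤ i → i + 1 ≤ k → x i < x (i + 1))
    (hτ0 : τ 0 = 0)
    (hτmono : ∀ i, i + 1 ≤ k - 1 → τ i < τ (i + 1))
    (ht0 : tt 0 = 0)
    (htmono : ∀ j, j + 1 ≤ L → tt j < tt (j + 1))
    (hchange : ∀ i, 1 ≤ i → i ≤ k - 1 → ∃ j, 1 ≤ j ∧ j ≤ L ∧ tt j = τ i)
    (hreg : ∀ j, j ≤ L →
      1 ≤ I j ∧ I j ≤ k ∧ τ (I j - 1) ≤ tt j ∧ (I j < k → tt j < τ (I j)))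
    (hphat : ∀ j, 1 ≤ j → j ≤ L + 1 → 0 ≤ phat j)
    (hphatsum : ∑ j ∈ Finset.Icc 1 (L + 1), phat j = 1)
    (hlam : ∀ θ : EuclideanSpace ℝ (Fin 2), ∀ i, lam θ i = θ 0 * Real.exp (θ 1 * x i))
    (ha : ∀ θ : EuclideanSpace ℝ (Fin 2), ∀ i,
      a θ i = (∑ l ∈ Finset.Icc 1 (i - 1), (τ l - τ (l - 1)) * lam θ l) / lam θ i)
    (hastar : ∀ θ : EuclideanSpace ℝ (Fin 2), ∀ i,
      astar θ i = (∑ l ∈ Finset.Icc 1 (i - 1), lam θ l * (τ l - τ (l - 1)) * (x l - x i))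
        / lam θ i)
    (hGT : ∀ θ : EuclideanSpace ℝ (Fin 2), ∀ j, j ≤ L →
      GT θ j = 1 - Real.exp (-(lam θ (I j)) * (tt j + a θ (I j) - τ (I j - 1))))
    (hgT : ∀ θ : EuclideanSpace ℝ (Fin 2), ∀ j, j ≤ L →
      gT θ j = lam θ (I j) * Real.exp (-(lam θ (I j)) * (tt j + a θ (I j) - τ (I j - 1))))
    (hpiv : ∀ θ : EuclideanSpace ℝ (Fin 2), ∀ j, 1 ≤ j → j ≤ L →
      piv θ j = GT θ j - GT θ (j - 1))
    (hpivend : ∀ θ : EuclideanSpace ℝ (Fin 2), piv θ (L + 1) = 1 - GT θ L)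
    (hz0 : ∀ θ : EuclideanSpace ℝ (Fin 2), z θ 0 = 0)
    (hzend : ∀ θ : EuclideanSpace ℝ (Fin 2), z θ (L + 1) = 0)
    (hz : ∀ θ : EuclideanSpace ℝ (Fin 2), ∀ j, 1 ≤ j → j ≤ L →
      z θ j = gT θ j • (WithLp.equiv 2 (Fin 2 → ℝ)).symm
        ![(tt j + a θ (I j) - τ (I j - 1)) / θ 0,
          (tt j + a θ (I j) - τ (I j - 1)) * x (I j) + astar θ (I j)])
    (hw : ∀ θ : EuclideanSpace ℝ (Fin 2), ∀ j, 1 ≤ j → j ≤ L + 1 →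
      w θ j = z θ j - z θ (j - 1)) :
    (∀ θ : EuclideanSpace ℝ (Fin 2), 0 < θ 0 →
      HasGradientAt
        (fun θ' : EuclideanSpace ℝ (Fin 2) => ∑ j ∈ Finset.Icc 1 (L + 1),
          (piv θ' j ^ (1 + β) - (1 + 1 / β) * phat j * piv θ' j ^ β
            + (1 / β) * phat j ^ (1 + β)))
        ((β + 1) • ∑ j ∈ Finset.Icc 1 (L + 1),
          (piv θ j ^ (β - 1) * (piv θ j - phat j)) • w θ j) θ)
    ∧
    (∀ θhat : EuclideanSpace ℝ (Fin 2), 0 < θhat 0 →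
      (∀ θ' : EuclideanSpace ℝ (Fin 2), 0 < θ' 0 →
        (∑ j ∈ Finset.Icc 1 (L + 1),
          (piv θhat j ^ (1 + β) - (1 + 1 / β) * phat j * piv θhat j ^ β
            + (1 / β) * phat j ^ (1 + β))) ≤
        ∑ j ∈ Finset.Icc 1 (L + 1),
          (piv θ' j ^ (1 + β) - (1 + 1 / β) * phat j * piv θ' j ^ β
            + (1 / β) * phat j ^ (1 + β))) →
      ∑ j ∈ Finset.Icc 1 (L + 1),
        (piv θhat j ^ (β - 1) * (phat j - piv θhat j)) • w θhat j = 0) := by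
  have hτle := aux_tau_le k τ hτmono
  have hτlt := aux_tau_lt k τ hτmono
  have hI0 : I 0 = 1 := by
    obtain ⟨h1, h2, h3, h4⟩ := hreg 0 (by omega)
    by_contra hne
    have h5 : 2 ≤ I 0 := by omega
    have h6 : τ 0 < τ (I 0 - 1) := hτlt 0 (I 0 - 1) (by omega) (by omega)
    rw [hτ0] at h6
    rw [ht0] at h3
    linarith
  -- positivity of the cell probabilities
  have hpivpos : ∀ θ : EuclideanSpace ℝ (Fin 2), 0 < θ 0 →
      ∀ j, 1 ≤ j → j ≤ L + 1 → 0 < piv θ j := by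
    intro θ hθ j hj1 hj2
    rcases Nat.lt_or_ge j (L+1) with hjL | hjE
    · have hjL' : j ≤ L := by omega
      have hstrict := aux_Lam_strict k L x τ tt I lam a hτmono htmono hreg hlam ha θ hθ j hj1 hjL'
      have hexp : Real.exp (-(lam θ (I j)) * (tt j + a θ (I j) - τ (I j - 1)))
          < Real.exp (-(lam θ (I (j-1))) * (tt (j-1) + a θ (I (j-1)) - τ (I (j-1) - 1))) := by
        apply Real.exp_lt_exp.2
        rw [neg_mul, neg_mul]
        linarith
      rw [hpiv θ j hj1 hjL', hGT θ j hjL', hGT θ (j-1) (by omega)]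
      linarith
    · have hjE' : j = L + 1 := by omega
      subst hjE'
      rw [hpivend θ, hGT θ L le_rfl]
      have := Real.exp_pos (-(lam θ (I L)) * (tt L + a θ (I L) - τ (I L - 1)))
      linarith
  -- Part 1 : the gradient formula
  have part1 : ∀ θ : EuclideanSpace ℝ (Fin 2), 0 < θ 0 →
      HasGradientAt
        (fun θ' : EuclideanSpace ℝ (Fin 2) => ∑ j ∈ Finset.Icc 1 (L + 1),
          (piv θ' j ^ (1 + β) - (1 + 1 / β) * phat j * piv θ' j ^ β
            + (1 / β) * phat j ^ (1 + β)))
        ((β + 1) • ∑ j ∈ Finset.Icc 1 (L + 1),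
          (piv θ j ^ (β - 1) * (piv θ j - phat j)) • w θ j) θ := by
    intro θ hθ
    have hGTder : ∀ j', j' ≤ L →
        HasFDerivAt (fun θ' => GT θ' j') (InnerProductSpace.toDual ℝ _ (z θ j')) θ := by
      intro j' hj'
      rcases Nat.eq_zero_or_pos j' with h0 | hpos
      · subst h0
        have hconst : (fun θ' : EuclideanSpace ℝ (Fin 2) => GT θ' 0) = fun _ => 0 := by
          funext θ'
          rw [hGT θ' 0 (by omega), hI0]
          have ha1 : a θ' 1 = 0 := by rw [ha]; simp
          rw [ha1, ht0, hτ0]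
          norm_num
        rw [hconst, hz0 θ]
        simpa using hasFDerivAt_const (0:ℝ) θ
      · exact aux_GTgrad x τ tt I lam a astar GT gT z j' hlam ha hastar
          (fun θ' => hGT θ' j' hj') (fun θ' => hgT θ' j' hj')
          (fun θ' => hz θ' j' hpos hj') θ hθ
    have hwgrad : ∀ j, 1 ≤ j → j ≤ L + 1 →
        HasFDerivAt (fun θ' => piv θ' j) (InnerProductSpace.toDual ℝ _ (w θ j)) θ := by
      intro j hj1 hj2
      rcases Nat.lt_or_ge j (L+1) with hjL | hjE
      · have hjL' : j ≤ L := by omega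
        have hfun : (fun θ' : EuclideanSpace ℝ (Fin 2) => piv θ' j)
            = fun θ' => GT θ' j - GT θ' (j-1) := funext fun θ' => hpiv θ' j hj1 hjL'
        rw [hfun, hw θ j hj1 hj2]
        have h := (hGTder j hjL').sub (hGTder (j-1) (by omega))
        rwa [← map_sub] at h
      · have hjE' : j = L + 1 := by omega
        subst hjE'
        have hfun : (fun θ' : EuclideanSpace ℝ (Fin 2) => piv θ' (L+1))
            = fun θ' => 1 - GT θ' L := funext fun θ' => hpivend θ'
        rw [hfun, hw θ (L+1) (by omega) le_rfl, hzend θ]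
        have h := (hGTder L le_rfl).const_sub 1
        have e : (L + 1 : ℕ) - 1 = L := by omega
        rw [e, zero_sub, map_neg]
        exact h
    have hterm : ∀ j ∈ Finset.Icc 1 (L+1), HasFDerivAt
        (fun θ' : EuclideanSpace ℝ (Fin 2) =>
          piv θ' j ^ (1+β) - (1 + 1/β) * phat j * piv θ' j ^ β + (1/β) * phat j ^ (1+β))
        (InnerProductSpace.toDual ℝ _
          (((β+1) * (piv θ j ^ (β-1) * (piv θ j - phat j))) • w θ j)) θ := by
      intro j hj
      simp only [Finset.mem_Icc] at hj
      have hp := hpivpos θ hθ j hj.1 hj.2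
      exact aux_comp (hwgrad j hj.1 hj.2) (aux_rpow_deriv β hβ (phat j) (piv θ j) hp)
    have hsum := HasFDerivAt.fun_sum hterm
    rw [hasGradientAt_iff_hasFDerivAt]
    have heq : InnerProductSpace.toDual ℝ (EuclideanSpace ℝ (Fin 2))
        ((β + 1) • ∑ j ∈ Finset.Icc 1 (L + 1),
          (piv θ j ^ (β - 1) * (piv θ j - phat j)) • w θ j)
        = ∑ j ∈ Finset.Icc 1 (L+1), InnerProductSpace.toDual ℝ _
          (((β+1) * (piv θ j ^ (β-1) * (piv θ j - phat j))) • w θ j) := by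
      rw [← map_sum]
      congr 1
      rw [Finset.smul_sum]
      exact Finset.sum_congr rfl fun j _ => (smul_smul _ _ _)
    rw [heq]
    exact hsum
  refine ⟨part1, ?_⟩
  -- Part 2 : the estimating equations at an interior minimizer
  intro θhat hθhat hmin
  have hloc : IsLocalMin (fun θ' : EuclideanSpace ℝ (Fin 2) => ∑ j ∈ Finset.Icc 1 (L + 1),
      (piv θ' j ^ (1 + β) - (1 + 1 / β) * phat j * piv θ' j ^ β
        + (1 / β) * phat j ^ (1 + β))) θhat := by
    have hmem : {θ' : EuclideanSpace ℝ (Fin 2) | 0 < θ' 0} ∈ nhds θhat :=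
      aux_U_open.mem_nhds hθhat
    exact Filter.eventually_of_mem hmem fun θ' hθ' => hmin θ' hθ'
  have hgrad := part1 θhat hθhat
  have h0 := hloc.hasFDerivAt_eq_zero hgrad.hasFDerivAt
  have h1 : ((β + 1) • ∑ j ∈ Finset.Icc 1 (L + 1),
      (piv θhat j ^ (β - 1) * (piv θhat j - phat j)) • w θhat j)
      = (0 : EuclideanSpace ℝ (Fin 2)) := by
    have := congrArg (InnerProductSpace.toDual ℝ (EuclideanSpace ℝ (Fin 2))).symm h0
    simpa using this
  have h2 : (∑ j ∈ Finset.Icc 1 (L + 1),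
      (piv θhat j ^ (β - 1) * (piv θhat j - phat j)) • w θhat j)
      = (0 : EuclideanSpace ℝ (Fin 2)) := by
    have hβ1 : (β + 1) ≠ 0 := by positivity
    rcases smul_eq_zero.1 h1 with h | h
    · exact absurd h hβ1
    · exact h
  have h3 : (∑ j ∈ Finset.Icc 1 (L + 1),
        (piv θhat j ^ (β - 1) * (phat j - piv θhat j)) • w θhat j)
      = - ∑ j ∈ Finset.Icc 1 (L + 1),
        (piv θhat j ^ (β - 1) * (piv θhat j - phat j)) • w θhat j := by
    rw [← Finset.sum_neg_distrib]
    refine Finset.sum_congr rfl fun j _ => ?_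
    rw [← neg_smul]
    congr 1
    ring
  rw [h3, h2, neg_zero]
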